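/- Every normalisable ECC term lies in some stratum: 𝒯 = ∪_{n∈ω} (Π_n ∪ Σ_n). -/

import Mathlib

namespace ECC

/-- Terms of Luo's Extended Calculus of Constructions, in de Bruijn representation. -/
inductive Term : Type
  | var   : ℕ → Term
  | prop  : Term
  | type  : ℕ → Term
  | pi    : Term → Term → Term
  | sigma : Term → Term → Term
  | lam   : Term → Term → Term
  | app   : Term → Term → Term
  | pair  : Term → Term → Term → Term   -- ⟨M, N⟩_B with type annotation B
  | proj1 : Term → Term
  | proj2 : Term → Term
deriving DecidableEq

/-- Lift (shift by `d`) all de Bruijn indices ≥ `k`. -/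
def lift (d : ℕ) : ℕ → Term → Term
  | k, .var n       => if n < k then .var n else .var (n + d)
  | _, .prop        => .prop
  | _, .type j      => .type j
  | k, .pi A B      => .pi (lift d k A) (lift d (k+1) B)
  | k, .sigma A B   => .sigma (lift d k A) (lift d (k+1) B)
  | k, .lam A M     => .lam (lift d k A) (lift d (k+1) M)
  | k, .app M N     => .app (lift d k M) (lift d k N)
  | k, .pair M N B  => .pair (lift d k M) (lift d k N) (lift d k B)
  | k, .proj1 M     => .proj1 (lift d k M)
  | k, .proj2 M     => .proj2 (lift d k M)

/-- Capture-avoiding substitution `[N/x]A` of the term `N` for the variable `x` in `A`. -/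
def subst (N : Term) : ℕ → Term → Term
  | k, .var n       => if n < k then .var n else if n = k then lift k 0 N else .var (n - 1)
  | _, .prop        => .prop
  | _, .type j      => .type j
  | k, .pi A B      => .pi (subst N k A) (subst N (k+1) B)
  | k, .sigma A B   => .sigma (subst N k A) (subst N (k+1) B)
  | k, .lam A M     => .lam (subst N k A) (subst N (k+1) M)
  | k, .app M M'    => .app (subst N k M) (subst N k M')
  | k, .pair M M' B => .pair (subst N k M) (subst N k M') (subst N k B)
  | k, .proj1 M     => .proj1 (subst N k M)
  | k, .proj2 M     => .proj2 (subst N k M)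

/-- `[N/x₀]B` : substitution for the outermost bound variable. -/
def subst0 (B N : Term) : Term := subst N 0 B

/-- One-step reduction (β together with the projection reductions, closed under all
term-formation congruences). -/
inductive Red : Term → Term → Prop
  | beta    : Red (.app (.lam A M) N) (subst0 M N)
  | pr1     : Red (.proj1 (.pair M N B)) M
  | pr2     : Red (.proj2 (.pair M N B)) N
  | piL     : Red A A' → Red (.pi A B) (.pi A' B)
  | piR     : Red B B' → Red (.pi A B) (.pi A B')
  | sigmaL  : Red A A' → Red (.sigma A B) (.sigma A' B)
  | sigmaR  : Red B B' → Red (.sigma A B) (.sigma A B')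
  | lamL    : Red A A' → Red (.lam A M) (.lam A' M)
  | lamR    : Red M M' → Red (.lam A M) (.lam A M')
  | appL    : Red M M' → Red (.app M N) (.app M' N)
  | appR    : Red N N' → Red (.app M N) (.app M N')
  | pairL   : Red M M' → Red (.pair M N B) (.pair M' N B)
  | pairR   : Red N N' → Red (.pair M N B) (.pair M N' B)
  | pairB   : Red B B' → Red (.pair M N B) (.pair M N B')
  | proj1C  : Red M M' → Red (.proj1 M) (.proj1 M')
  | proj2C  : Red M M' → Red (.proj2 M) (.proj2 M')

/-- Conversion `≃` : the equivalence relation generated by reduction. -/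
def Conv : Term → Term → Prop := Relation.EqvGen Red

/-- `A` has a normal form. -/
def HasNF (A : Term) : Prop :=
  ∃ B, Relation.ReflTransGen Red A B ∧ ∀ C, ¬ Red B C

/-- `𝒯` : the set of normalisable terms. -/
def Tset : Set Term := {A | HasNF A}

/-- Universes are `Prop` and the `Type_j`. -/
def IsUniv (T : Term) : Prop := T = .prop ∨ ∃ j, T = .type j

/-- The cumulativity relation `⪯` : the smallest preorder containing conversion,
the universe order, congruence for Π in the codomain, and congruence for Σ in both
components. -/
inductive Cum : Term → Term → Prop
  | conv     : Conv A B → Cum A B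
  | propType : Cum .prop (.type 0)
  | typeType : j ≤ k → Cum (.type j) (.type k)
  | pi       : Conv A A' → Cum B B' → Cum (.pi A B) (.pi A' B')
  | sigma    : Cum A A' → Cum B B' → Cum (.sigma A B) (.sigma A' B')
  | trans    : Cum A B → Cum B C → Cum A C

/-- The strict cumulativity relation `≺` : `A ⪯ B` and `A ≄ B`. -/
def SCum (A B : Term) : Prop := Cum A B ∧ ¬ Conv A B

/-- The stratified cumulativity relations `⪯ᵢ`. -/
inductive CumL : ℕ → Term → Term → Prop
  | conv     : Conv A B → CumL i A B
  | propType : CumL i .prop (.type j)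
  | typeType : j < k → CumL i (.type j) (.type k)
  | succ     : CumL i A B → CumL (i+1) A B
  | pi       : Conv M (.pi A B) → Conv N (.pi A' B') → Conv A A' → CumL i B B' →
               CumL (i+1) M N
  | sigma    : Conv M (.sigma A B) → Conv N (.sigma A' B') → CumL i A A' → CumL i B B' →
               CumL (i+1) M N

/-- Strict stratified cumulativity `≺ᵢ`. -/
def SCumL (i : ℕ) (A B : Term) : Prop := CumL i A B ∧ ¬ Conv A B

/-- Is the outermost symbol of a term Π or Σ? -/
def BinderHeaded : Term → Prop
  | .pi _ _    => True
  | .sigma _ _ => True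
  | _          => False

/-- The base stratum: normalisable terms not convertible to a binder-headed
normalisable term. -/
def Base : Set Term :=
  {T | HasNF T ∧ ¬ ∃ B, HasNF B ∧ BinderHeaded B ∧ Conv T B}

/-- The stratification `(Π_n, Σ_n)` of `𝒯`. -/
def Strata : ℕ → Set Term × Set Term
  | 0 => (Base, Base)
  | n+1 =>
    ({T | ∃ k l, ∃ _ : k + l = n, ∃ A B, HasNF (Term.pi A B) ∧ Conv T (Term.pi A B) ∧
        A ∈ (Strata k).1 ∪ (Strata k).2 ∧ B ∈ (Strata l).1 ∪ (Strata l).2},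
     {T | ∃ k l, ∃ _ : k + l = n, ∃ A B, HasNF (Term.sigma A B) ∧ Conv T (Term.sigma A B) ∧
        A ∈ (Strata k).1 ∪ (Strata k).2 ∧ B ∈ (Strata l).1 ∪ (Strata l).2})
termination_by n => n
decreasing_by all_goals omega

/-- The stratum `Π_n`. -/
def PiStr (n : ℕ) : Set Term := (Strata n).1

/-- The stratum `Σ_n`. -/
def SigStr (n : ℕ) : Set Term := (Strata n).2

/-- The specification of the rank function `φ : 𝒯 → ω`. -/
def PhiSpec (φ : Term → ℕ) : Prop :=
  (∀ M N, HasNF M → HasNF N → Conv M N → φ M = φ N) ∧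
  (∀ T, HasNF T → Conv T .prop → φ T = 2) ∧
  (∀ T j, HasNF T → Conv T (.type j) → φ T = 3 + j) ∧
  (∀ T, T ∈ PiStr 0 → ¬ Conv T .prop → (∀ j, ¬ Conv T (.type j)) → φ T = 1) ∧
  (∀ T A B, HasNF T → (Conv T (.pi A B) ∨ Conv T (.sigma A B)) → φ T = φ A * φ B) ∧
  (∀ T, HasNF T → 0 < φ T)

mutual
/-- Valid contexts of ECC (de Bruijn: the head of the list is the most recent entry). -/
inductive Valid : List Term → Prop
  | nil  : Valid []
  | cons : Typing Γ A (.type j) → Valid (A :: Γ)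

/-- The typing judgement `Γ ⊢ M : A` of ECC. -/
inductive Typing : List Term → Term → Term → Prop
  | prop  : Valid Γ → Typing Γ .prop (.type 0)
  | type  : Valid Γ → Typing Γ (.type j) (.type (j+1))
  | var   : Valid Γ → Γ[n]? = some A → Typing Γ (.var n) (lift (n+1) 0 A)
  | pi1   : Typing Γ A (.type j) → Typing (A :: Γ) B .prop →
            Typing Γ (.pi A B) .prop
  | pi2   : Typing Γ A (.type j) → Typing (A :: Γ) B (.type j) →
            Typing Γ (.pi A B) (.type j)
  | sig   : Typing Γ A (.type j) → Typing (A :: Γ) B (.type j) →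
            Typing Γ (.sigma A B) (.type j)
  | lam   : Typing (A :: Γ) M B → Typing Γ (.lam A M) (.pi A B)
  | app   : Typing Γ M (.pi A B) → Typing Γ N A → Typing Γ (.app M N) (subst0 B N)
  | pair  : Typing Γ M A → Typing Γ N (subst0 B M) → Typing (A :: Γ) B (.type j) →
            Typing Γ (.pair M N (.sigma A B)) (.sigma A B)
  | proj1 : Typing Γ M (.sigma A B) → Typing Γ (.proj1 M) A
  | proj2 : Typing Γ M (.sigma A B) → Typing Γ (.proj2 M) (subst0 B (.proj1 M))
  | cum   : Typing Γ M A → Typing Γ B (.type j) → Cum A B → Typing Γ M B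
end

/-- `Type_j` for `j ∈ ℤ`, with the convention `Type_{-1} = Prop`. -/
def TType (j : ℤ) : Term := if j < 0 then .prop else .type j.toNat

/-- The typing judgement of the restricted system `ECC⁻`: the rules
`(Π2)(Σ)(app)(pair)(⪯)` of ECC are replaced by `(Π2')(Σ')(app')(pair')` and `(≃)_ρ`. -/
inductive TypingM : List Term → Term → Term → Prop
  | prop  : Valid Γ → TypingM Γ .prop (.type 0)
  | type  : Valid Γ → TypingM Γ (.type j) (.type (j+1))
  | var   : Valid Γ → Γ[n]? = some A → TypingM Γ (.var n) (lift (n+1) 0 A)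
  | pi1   : TypingM Γ A (.type j) → TypingM (A :: Γ) B .prop →
            TypingM Γ (.pi A B) .prop
  | pi2'  : TypingM Γ A (TType j) → TypingM (A :: Γ) B (TType k) → 0 ≤ k →
            TypingM Γ (.pi A B) (TType (max (max j k) 0))
  | sig'  : TypingM Γ A (TType j) → TypingM (A :: Γ) B (TType k) →
            TypingM Γ (.sigma A B) (TType (max (max j k) 0))
  | lam   : TypingM (A :: Γ) M B → TypingM Γ (.lam A M) (.pi A B)
  | app'  : TypingM Γ M (.pi A B) → TypingM Γ N A' → Cum A' A →
            TypingM Γ (.app M N) (subst0 B N)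
  | pair' : TypingM Γ M A → TypingM Γ N C → TypingM (A' :: Γ) B' (.type j) →
            Cum A A' → Cum C (subst0 B' M) →
            TypingM Γ (.pair M N (.sigma A' B')) (.sigma A' B')
  | proj1 : TypingM Γ M (.sigma A B) → TypingM Γ (.proj1 M) A
  | proj2 : TypingM Γ M (.sigma A B) → TypingM Γ (.proj2 M) (subst0 B (.proj1 M))
  | conv  : TypingM Γ M A → Conv A A' → Typing Γ A' (.type j) → TypingM Γ M A'

end ECC

namespace ECC

theorem lift_lift_comm (d e : ℕ) :
    ∀ t j k, j ≤ k → lift d (k + e) (lift e j t) = lift e j (lift d k t) := by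
  intro t
  induction t with
  | var n =>
    intro j k h
    simp only [lift]
    split_ifs <;> simp only [lift] <;> split_ifs <;> first | rfl | (exfalso; omega) | (congr 1; omega)
  | prop => intros; rfl
  | type => intros; rfl
  | pi A B ihA ihB => intro j k h; simp only [lift]; rw [ihA _ _ h]; have := ihB (j+1) (k+1) (by omega); rw [show k + e + 1 = k + 1 + e by omega, this]
  | sigma A B ihA ihB => intro j k h; simp only [lift]; rw [ihA _ _ h]; have := ihB (j+1) (k+1) (by omega); rw [show k + e + 1 = k + 1 + e by omega, this]
  | lam A B ihA ihB => intro j k h; simp only [lift]; rw [ihA _ _ h]; have := ihB (j+1) (k+1) (by omega); rw [show k + e + 1 = k + 1 + e by omega, this]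
  | app A B ihA ihB => intro j k h; simp only [lift]; rw [ihA _ _ h, ihB _ _ h]
  | pair A B C ihA ihB ihC => intro j k h; simp only [lift]; rw [ihA _ _ h, ihB _ _ h, ihC _ _ h]
  | proj1 A ihA => intro j k h; simp only [lift]; rw [ihA _ _ h]
  | proj2 A ihA => intro j k h; simp only [lift]; rw [ihA _ _ h]

theorem lift_lift_add (j : ℕ) :
    ∀ t c c' m, c' ≤ c → c ≤ m + c' → lift j c (lift m c' t) = lift (m + j) c' t := by
  intro t
  induction t with
  | var n =>
    intro c c' m h1 h2
    simp only [lift]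
    split_ifs <;> simp only [lift] <;> split_ifs <;> first | rfl | (exfalso; omega) | (congr 1; omega)
  | prop => intros; rfl
  | type => intros; rfl
  | pi A B ihA ihB => intro c c' m h1 h2; simp only [lift]; rw [ihA _ _ _ h1 h2, ihB _ _ _ (by omega) (by omega)]
  | sigma A B ihA ihB => intro c c' m h1 h2; simp only [lift]; rw [ihA _ _ _ h1 h2, ihB _ _ _ (by omega) (by omega)]
  | lam A B ihA ihB => intro c c' m h1 h2; simp only [lift]; rw [ihA _ _ _ h1 h2, ihB _ _ _ (by omega) (by omega)]
  | app A B ihA ihB => intro c c' m h1 h2; simp only [lift]; rw [ihA _ _ _ h1 h2, ihB _ _ _ h1 h2]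
  | pair A B C ihA ihB ihC => intro c c' m h1 h2; simp only [lift]; rw [ihA _ _ _ h1 h2, ihB _ _ _ h1 h2, ihC _ _ _ h1 h2]
  | proj1 A ihA => intro c c' m h1 h2; simp only [lift]; rw [ihA _ _ _ h1 h2]
  | proj2 A ihA => intro c c' m h1 h2; simp only [lift]; rw [ihA _ _ _ h1 h2]

theorem subst_lift_cancel (Q : Term) :
    ∀ t j c m, c ≤ j → j < c + m → subst Q j (lift m c t) = lift (m-1) c t := by
  intro t
  induction t with
  | var n =>
    intro j c m h1 h2
    simp only [lift, subst]
    split_ifs <;> simp only [subst, lift] <;> split_ifs <;> first | rfl | (exfalso; omega) | (congr 1; omega)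
  | prop => intros; rfl
  | type => intros; rfl
  | pi A B ihA ihB => intro j c m h1 h2; simp only [lift, subst]; rw [ihA _ _ _ h1 h2, ihB _ _ _ (by omega) (by omega)]
  | sigma A B ihA ihB => intro j c m h1 h2; simp only [lift, subst]; rw [ihA _ _ _ h1 h2, ihB _ _ _ (by omega) (by omega)]
  | lam A B ihA ihB => intro j c m h1 h2; simp only [lift, subst]; rw [ihA _ _ _ h1 h2, ihB _ _ _ (by omega) (by omega)]
  | app A B ihA ihB => intro j c m h1 h2; simp only [lift, subst]; rw [ihA _ _ _ h1 h2, ihB _ _ _ h1 h2]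
  | pair A B C ihA ihB ihC => intro j c m h1 h2; simp only [lift, subst]; rw [ihA _ _ _ h1 h2, ihB _ _ _ h1 h2, ihC _ _ _ h1 h2]
  | proj1 A ihA => intro j c m h1 h2; simp only [lift, subst]; rw [ihA _ _ _ h1 h2]
  | proj2 A ihA => intro j c m h1 h2; simp only [lift, subst]; rw [ihA _ _ _ h1 h2]

theorem subst_lift_comm (N : Term) :
    ∀ t j K c, j ≤ K → subst N (K + c) (lift j c t) = lift j c (subst N (K - j + c) t) := by
  intro t
  induction t with
  | var n =>
    intro j K c h
    simp only [lift, subst]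
    split_ifs <;> (try simp only [subst, lift]) <;> (try split_ifs) <;>
      first
      | rfl | (exfalso; omega) | (congr 1; omega)
      | (rw [lift_lift_add j N c 0 (K - j + c) (by omega) (by omega)]; congr 1; omega)
  | prop => intros; rfl
  | type => intros; rfl
  | pi A B ihA ihB => intro j K c h; simp only [lift, subst]
                      rw [ihA _ _ _ h]
                      have := ihB j K (c+1) h
                      rw [show K + c + 1 = K + (c+1) by omega, this, show K - j + c + 1 = K - j + (c+1) by omega]
  | sigma A B ihA ihB => intro j K c h; simp only [lift, subst]
                         rw [ihA _ _ _ h]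
                         have := ihB j K (c+1) h
                         rw [show K + c + 1 = K + (c+1) by omega, this, show K - j + c + 1 = K - j + (c+1) by omega]
  | lam A B ihA ihB => intro j K c h; simp only [lift, subst]
                       rw [ihA _ _ _ h]
                       have := ihB j K (c+1) h
                       rw [show K + c + 1 = K + (c+1) by omega, this, show K - j + c + 1 = K - j + (c+1) by omega]
  | app A B ihA ihB => intro j K c h; simp only [lift, subst]; rw [ihA _ _ _ h, ihB _ _ _ h]
  | pair A B C ihA ihB ihC => intro j K c h; simp only [lift, subst]; rw [ihA _ _ _ h, ihB _ _ _ h, ihC _ _ _ h]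
  | proj1 A ihA => intro j K c h; simp only [lift, subst]; rw [ihA _ _ _ h]
  | proj2 A ihA => intro j K c h; simp only [lift, subst]; rw [ihA _ _ _ h]

theorem lift_subst (N : Term) :
    ∀ t d j k, j ≤ k → lift d k (subst N j t) = subst (lift d (k - j) N) j (lift d (k+1) t) := by
  intro t
  induction t with
  | var n =>
    intro d j k h
    simp only [lift, subst]
    split_ifs <;> (try simp only [subst, lift]) <;> (try split_ifs) <;>
      first
      | rfl | (exfalso; omega) | (congr 1; omega)
      | (have H := lift_lift_comm d j N 0 (k-j) (by omega);
         rw [show k - j + j = k from by omega] at H; exact H)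
  | prop => intros; rfl
  | type => intros; rfl
  | pi A B ihA ihB => intro d j k h; simp only [lift, subst]
                      rw [ihA _ _ _ h]
                      have := ihB d (j+1) (k+1) (by omega)
                      rw [this, show k + 1 - (j+1) = k - j by omega]
  | sigma A B ihA ihB => intro d j k h; simp only [lift, subst]
                         rw [ihA _ _ _ h]
                         have := ihB d (j+1) (k+1) (by omega)
                         rw [this, show k + 1 - (j+1) = k - j by omega]
  | lam A B ihA ihB => intro d j k h; simp only [lift, subst]
                       rw [ihA _ _ _ h]
                       have := ihB d (j+1) (k+1) (by omega)
                       rw [this, show k + 1 - (j+1) = k - j by omega]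
  | app A B ihA ihB => intro d j k h; simp only [lift, subst]; rw [ihA _ _ _ h, ihB _ _ _ h]
  | pair A B C ihA ihB ihC => intro d j k h; simp only [lift, subst]; rw [ihA _ _ _ h, ihB _ _ _ h, ihC _ _ _ h]
  | proj1 A ihA => intro d j k h; simp only [lift, subst]; rw [ihA _ _ _ h]
  | proj2 A ihA => intro d j k h; simp only [lift, subst]; rw [ihA _ _ _ h]

theorem subst_subst (N P : Term) :
    ∀ t j k, j ≤ k → subst N k (subst P j t) = subst (subst N (k-j) P) j (subst N (k+1) t) := by
  intro t
  induction t with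
  | var n =>
    intro j k h
    simp only [subst]
    split_ifs <;> (try simp only [subst, lift]) <;> (try split_ifs) <;>
      first
      | rfl | (exfalso; omega) | (congr 1; omega)
      | (have H := subst_lift_comm N P j k 0 h; simp only [Nat.add_zero] at H; exact H)
      | (rw [subst_lift_cancel (subst N (k-j) P) N j 0 (k+1) (by omega) (by omega)]; norm_num)
  | prop => intros; rfl
  | type => intros; rfl
  | pi A B ihA ihB => intro j k h; simp only [subst]
                      rw [ihA _ _ h]
                      have := ihB (j+1) (k+1) (by omega)
                      rw [this, show k + 1 - (j+1) = k - j by omega]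
  | sigma A B ihA ihB => intro j k h; simp only [subst]
                         rw [ihA _ _ h]
                         have := ihB (j+1) (k+1) (by omega)
                         rw [this, show k + 1 - (j+1) = k - j by omega]
  | lam A B ihA ihB => intro j k h; simp only [subst]
                       rw [ihA _ _ h]
                       have := ihB (j+1) (k+1) (by omega)
                       rw [this, show k + 1 - (j+1) = k - j by omega]
  | app A B ihA ihB => intro j k h; simp only [subst]; rw [ihA _ _ h, ihB _ _ h]
  | pair A B C ihA ihB ihC => intro j k h; simp only [subst]; rw [ihA _ _ h, ihB _ _ h, ihC _ _ h]
  | proj1 A ihA => intro j k h; simp only [subst]; rw [ihA _ _ h]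
  | proj2 A ihA => intro j k h; simp only [subst]; rw [ihA _ _ h]

end ECC
namespace ECC

/-- Parallel reduction (Tait/Martin-Löf). -/
inductive Par : Term → Term → Prop
  | var   : Par (.var n) (.var n)
  | prop  : Par .prop .prop
  | type  : Par (.type j) (.type j)
  | pi    : Par A A' → Par B B' → Par (.pi A B) (.pi A' B')
  | sigma : Par A A' → Par B B' → Par (.sigma A B) (.sigma A' B')
  | lam   : Par A A' → Par M M' → Par (.lam A M) (.lam A' M')
  | app   : Par M M' → Par N N' → Par (.app M N) (.app M' N')
  | pair  : Par M M' → Par N N' → Par B B' → Par (.pair M N B) (.pair M' N' B')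
  | proj1 : Par M M' → Par (.proj1 M) (.proj1 M')
  | proj2 : Par M M' → Par (.proj2 M) (.proj2 M')
  | beta  : Par M M' → Par N N' → Par (.app (.lam A M) N) (subst0 M' N')
  | pr1   : Par M M' → Par (.proj1 (.pair M N B)) M'
  | pr2   : Par N N' → Par (.proj2 (.pair M N B)) N'

theorem Par.refl : ∀ t, Par t t := by
  intro t
  induction t with
  | var n => exact .var
  | prop => exact .prop
  | type j => exact .type
  | pi A B ihA ihB => exact .pi ihA ihB
  | sigma A B ihA ihB => exact .sigma ihA ihB
  | lam A B ihA ihB => exact .lam ihA ihB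
  | app A B ihA ihB => exact .app ihA ihB
  | pair A B C ihA ihB ihC => exact .pair ihA ihB ihC
  | proj1 A ihA => exact .proj1 ihA
  | proj2 A ihA => exact .proj2 ihA

theorem Par.of_red (h : Red M N) : Par M N := by
  induction h with
  | beta => exact .beta (Par.refl _) (Par.refl _)
  | pr1 => exact .pr1 (Par.refl _)
  | pr2 => exact .pr2 (Par.refl _)
  | piL _ ih => exact .pi ih (Par.refl _)
  | piR _ ih => exact .pi (Par.refl _) ih
  | sigmaL _ ih => exact .sigma ih (Par.refl _)
  | sigmaR _ ih => exact .sigma (Par.refl _) ih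
  | lamL _ ih => exact .lam ih (Par.refl _)
  | lamR _ ih => exact .lam (Par.refl _) ih
  | appL _ ih => exact .app ih (Par.refl _)
  | appR _ ih => exact .app (Par.refl _) ih
  | pairL _ ih => exact .pair ih (Par.refl _) (Par.refl _)
  | pairR _ ih => exact .pair (Par.refl _) ih (Par.refl _)
  | pairB _ ih => exact .pair (Par.refl _) (Par.refl _) ih
  | proj1C _ ih => exact .proj1 ih
  | proj2C _ ih => exact .proj2 ih

/-- Multi-step reduction congruences. -/
theorem RTG.congr1 {f : Term → Term} (hf : ∀ {a b}, Red a b → Red (f a) (f b))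
    (h : Relation.ReflTransGen Red M N) : Relation.ReflTransGen Red (f M) (f N) := by
  induction h with
  | refl => exact .refl
  | tail _ h2 ih => exact ih.tail (hf h2)

theorem Par.to_rtg (h : Par M N) : Relation.ReflTransGen Red M N := by
  induction h with
  | var => exact .refl
  | prop => exact .refl
  | type => exact .refl
  | pi _ _ ihA ihB =>
      exact (RTG.congr1 (fun h => Red.piL h) ihA).trans (RTG.congr1 (fun h => Red.piR h) ihB)
  | sigma _ _ ihA ihB =>
      exact (RTG.congr1 (fun h => Red.sigmaL h) ihA).trans (RTG.congr1 (fun h => Red.sigmaR h) ihB)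
  | lam _ _ ihA ihB =>
      exact (RTG.congr1 (fun h => Red.lamL h) ihA).trans (RTG.congr1 (fun h => Red.lamR h) ihB)
  | app _ _ ihA ihB =>
      exact (RTG.congr1 (fun h => Red.appL h) ihA).trans (RTG.congr1 (fun h => Red.appR h) ihB)
  | @pair M M' N N' B B' _ _ _ ihA ihB ihC =>
      exact ((RTG.congr1 (f := fun x => Term.pair x N B) (fun h => Red.pairL h) ihA).trans
        (RTG.congr1 (f := fun x => Term.pair M' x B) (fun h => Red.pairR h) ihB)).trans
        (RTG.congr1 (f := fun x => Term.pair M' N' x) (fun h => Red.pairB h) ihC)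
  | proj1 _ ih => exact RTG.congr1 (fun h => Red.proj1C h) ih
  | proj2 _ ih => exact RTG.congr1 (fun h => Red.proj2C h) ih
  | @beta M M' N N' A _ _ ihM ihN =>
      exact Relation.ReflTransGen.tail
        ((RTG.congr1 (f := fun x => Term.app (Term.lam A x) N) (fun h => Red.appL (Red.lamR h)) ihM).trans
          (RTG.congr1 (f := fun x => Term.app (Term.lam A M') x) (fun h => Red.appR h) ihN)) Red.beta
  | pr1 _ ih =>
      exact Relation.ReflTransGen.head Red.pr1 ih
  | pr2 _ ih =>
      exact Relation.ReflTransGen.head Red.pr2 ih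

theorem Par.lift (d : ℕ) (h : Par M N) : ∀ k, Par (lift d k M) (lift d k N) := by
  induction h with
  | var => intro k; simp only [ECC.lift]; split_ifs <;> exact .var
  | prop => intro k; exact .prop
  | type => intro k; exact .type
  | pi _ _ ihA ihB => intro k; exact .pi (ihA k) (ihB (k+1))
  | sigma _ _ ihA ihB => intro k; exact .sigma (ihA k) (ihB (k+1))
  | lam _ _ ihA ihB => intro k; exact .lam (ihA k) (ihB (k+1))
  | app _ _ ihA ihB => intro k; exact .app (ihA k) (ihB k)
  | pair _ _ _ uhA ihB ihC => intro k; exact .pair (uhA k) (ihB k) (ihC k)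
  | proj1 _ ih => intro k; exact .proj1 (ih k)
  | proj2 _ ih => intro k; exact .proj2 (ih k)
  | @beta M M' N N' A _ _ ihM ihN =>
      intro k
      have h1 : ECC.lift d k (subst0 M' N') = subst0 (ECC.lift d (k+1) M') (ECC.lift d k N') := by
        simpa [subst0] using lift_subst N' M' d 0 k (by omega)
      simpa only [ECC.lift, h1] using Par.beta (ihM (k+1)) (ihN k)
  | pr1 _ ih => intro k; exact .pr1 (ih k)
  | pr2 _ ih => intro k; exact .pr2 (ih k)

theorem Par.subst (hMN : Par P P') (h : Par M N) :
    ∀ k, Par (ECC.subst P k M) (ECC.subst P' k N) := by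
  induction h with
  | var =>
      intro k; simp only [ECC.subst]
      split_ifs <;> first | exact .var | exact hMN.lift k 0
  | prop => intro k; exact .prop
  | type => intro k; exact .type
  | pi _ _ ihA ihB => intro k; exact .pi (ihA k) (ihB (k+1))
  | sigma _ _ ihA ihB => intro k; exact .sigma (ihA k) (ihB (k+1))
  | lam _ _ ihA ihB => intro k; exact .lam (ihA k) (ihB (k+1))
  | app _ _ ihA ihB => intro k; exact .app (ihA k) (ihB k)
  | pair _ _ _ ihA ihB ihC => intro k; exact .pair (ihA k) (ihB k) (ihC k)
  | proj1 _ ih => intro k; exact .proj1 (ih k)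
  | proj2 _ ih => intro k; exact .proj2 (ih k)
  | @beta M M' N N' A _ _ ihM ihN =>
      intro k
      have h1 : ECC.subst P' k (subst0 M' N') =
          subst0 (ECC.subst P' (k+1) M') (ECC.subst P' k N') := by
        simpa [subst0] using subst_subst P' N' M' 0 k (by omega)
      simpa only [ECC.subst, h1] using Par.beta (ihM (k+1)) (ihN k)
  | pr1 _ ih => intro k; exact .pr1 (ih k)
  | pr2 _ ih => intro k; exact .pr2 (ih k)

theorem Par.subst0 (h : Par M M') (h2 : Par N N') : Par (subst0 M N) (subst0 M' N') :=
  Par.subst h2 h 0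

end ECC
namespace ECC

/-- Complete development (Takahashi). -/
def dev : Term → Term
  | .var n => .var n
  | .prop => .prop
  | .type j => .type j
  | .pi A B => .pi (dev A) (dev B)
  | .sigma A B => .sigma (dev A) (dev B)
  | .lam A M => .lam (dev A) (dev M)
  | .app (.lam _ M) N => subst0 (dev M) (dev N)
  | .app M N => .app (dev M) (dev N)
  | .pair M N B => .pair (dev M) (dev N) (dev B)
  | .proj1 (.pair M _ _) => dev M
  | .proj1 M => .proj1 (dev M)
  | .proj2 (.pair _ N _) => dev N
  | .proj2 M => .proj2 (dev M)

theorem Par.triangle (h : Par M N) : Par N (dev M) := by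
  induction h with
  | var => exact .var
  | prop => exact .prop
  | type => exact .type
  | pi _ _ ihA ihB => exact .pi ihA ihB
  | sigma _ _ ihA ihB => exact .sigma ihA ihB
  | lam _ _ ihA ihB => exact .lam ihA ihB
  | @app M1 M1' N1 N1' h1 h2 ih1 ih2 =>
      cases M1 with
      | lam A P =>
          cases h1 with
          | lam hA hP =>
              cases ih1 with
              | lam ihA ihP => simpa [dev] using Par.beta ihP ih2
      | var n => simp only [dev]; exact .app ih1 ih2
      | prop => simp only [dev]; exact .app ih1 ih2
      | type j => simp only [dev]; exact .app ih1 ih2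
      | pi A B => simp only [dev]; exact .app ih1 ih2
      | sigma A B => simp only [dev]; exact .app ih1 ih2
      | app A B => simp only [dev]; exact .app ih1 ih2
      | pair A B C => simp only [dev]; exact .app ih1 ih2
      | proj1 A => simp only [dev]; exact .app ih1 ih2
      | proj2 A => simp only [dev]; exact .app ih1 ih2
  | pair _ _ _ ihA ihB ihC => exact .pair ihA ihB ihC
  | @proj1 M1 M1' h1 ih1 =>
      cases M1 with
      | pair P Q B =>
          cases h1 with
          | pair hP hQ hB =>
              cases ih1 with
              | pair ihP ihQ ihB => simpa [dev] using Par.pr1 ihP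
      | var n => simp only [dev]; exact .proj1 ih1
      | prop => simp only [dev]; exact .proj1 ih1
      | type j => simp only [dev]; exact .proj1 ih1
      | pi A B => simp only [dev]; exact .proj1 ih1
      | sigma A B => simp only [dev]; exact .proj1 ih1
      | lam A B => simp only [dev]; exact .proj1 ih1
      | app A B => simp only [dev]; exact .proj1 ih1
      | proj1 A => simp only [dev]; exact .proj1 ih1
      | proj2 A => simp only [dev]; exact .proj1 ih1
  | @proj2 M1 M1' h1 ih1 =>
      cases M1 with
      | pair P Q B =>
          cases h1 with
          | pair hP hQ hB =>
              cases ih1 with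
              | pair ihP ihQ ihB => simpa [dev] using Par.pr2 ihQ
      | var n => simp only [dev]; exact .proj2 ih1
      | prop => simp only [dev]; exact .proj2 ih1
      | type j => simp only [dev]; exact .proj2 ih1
      | pi A B => simp only [dev]; exact .proj2 ih1
      | sigma A B => simp only [dev]; exact .proj2 ih1
      | lam A B => simp only [dev]; exact .proj2 ih1
      | app A B => simp only [dev]; exact .proj2 ih1
      | proj1 A => simp only [dev]; exact .proj2 ih1
      | proj2 A => simp only [dev]; exact .proj2 ih1
  | @beta M M' N N' A _ _ ihM ihN => simpa [dev] using Par.subst0 ihM ihN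
  | pr1 _ ih => simpa [dev] using ih
  | pr2 _ ih => simpa [dev] using ih

theorem rtgPar_to_red (h : Relation.ReflTransGen Par A B) : Relation.ReflTransGen Red A B := by
  induction h with
  | refl => exact .refl
  | tail _ h2 ih => exact ih.trans h2.to_rtg

theorem conv_of_rtg (h : Relation.ReflTransGen Red A B) : Conv A B := by
  induction h with
  | refl => exact .refl A
  | tail _ h2 ih => exact .trans _ _ _ ih (.rel _ _ h2)

theorem joinOfConv (h : Conv A B) :
    ∃ C, Relation.ReflTransGen Red A C ∧ Relation.ReflTransGen Red B C := by
  have hd : ∀ a b c, Par a b → Par a c →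
      ∃ d, Relation.ReflGen Par b d ∧ Relation.ReflTransGen Par c d :=
    fun a b c h1 h2 => ⟨dev a, .single h1.triangle, .single h2.triangle⟩
  have hequiv := Relation.equivalence_join_reflTransGen hd
  have hpar : Relation.EqvGen Par A B := Relation.EqvGen.mono (r := Red) (p := Par) (fun _ _ h => Par.of_red h) _ _ h
  clear h
  have hjoin : Relation.Join (Relation.ReflTransGen Par) A B := by
    induction hpar with
    | rel a b hab => exact ⟨b, .single hab, .refl⟩
    | refl a => exact hequiv.refl a
    | symm a b _ ih => exact hequiv.symm ih
    | trans a b c _ _ ih1 ih2 => exact hequiv.trans ih1 ih2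
  obtain ⟨C, h1, h2⟩ := hjoin
  exact ⟨C, rtgPar_to_red h1, rtgPar_to_red h2⟩

theorem eq_of_normal_rtg (hN : ∀ C, ¬ Red N C) (h : Relation.ReflTransGen Red N M) : M = N := by
  induction h with
  | refl => rfl
  | tail _ h2 ih => subst ih; exact absurd h2 (hN _)

theorem hasNF_of_conv (h : Conv T B) (hB : HasNF B) : HasNF T := by
  obtain ⟨N, hBN, hnf⟩ := hB
  have hTN : Conv T N := .trans _ _ _ h (conv_of_rtg hBN)
  obtain ⟨C, h1, h2⟩ := joinOfConv hTN
  have : C = N := eq_of_normal_rtg hnf h2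
  exact ⟨N, this ▸ h1, hnf⟩

theorem binder_rtg (h : Relation.ReflTransGen Red M N) (hb : BinderHeaded M) :
    BinderHeaded N := by
  induction h with
  | refl => exact hb
  | tail _ h2 ih => cases h2 <;> simp [BinderHeaded] at ih ⊢

theorem piStr_zero : PiStr 0 = Base := by rw [PiStr, Strata]
theorem sigStr_zero : SigStr 0 = Base := by rw [SigStr, Strata]

theorem piStr_succ (n : ℕ) : PiStr (n+1) =
    {T | ∃ k l, ∃ _ : k + l = n, ∃ A B, HasNF (Term.pi A B) ∧ Conv T (Term.pi A B) ∧
        A ∈ PiStr k ∪ SigStr k ∧ B ∈ PiStr l ∪ SigStr l} := by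
  rw [PiStr, Strata]; rfl

theorem sigStr_succ (n : ℕ) : SigStr (n+1) =
    {T | ∃ k l, ∃ _ : k + l = n, ∃ A B, HasNF (Term.sigma A B) ∧ Conv T (Term.sigma A B) ∧
        A ∈ PiStr k ∪ SigStr k ∧ B ∈ PiStr l ∪ SigStr l} := by
  rw [SigStr, Strata]; rfl

theorem mem_base (hnf : ∀ C, ¬ Red N C) (hb : ¬ BinderHeaded N)
    (hT : Relation.ReflTransGen Red T N) : T ∈ Base := by
  refine ⟨⟨N, hT, hnf⟩, ?_⟩
  rintro ⟨B, hBnf, hbB, hconv⟩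
  have h1 : Conv N B :=
    .trans _ _ _ (.symm _ _ (conv_of_rtg hT)) hconv
  obtain ⟨C, hNC, hBC⟩ := joinOfConv h1
  have hCN : C = N := eq_of_normal_rtg hnf hNC
  subst hCN
  exact hb (binder_rtg hBC hbB)

theorem mem_strata_of_nf :
    ∀ N, (∀ C, ¬ Red N C) → ∀ T, Relation.ReflTransGen Red T N →
      ∃ n, T ∈ PiStr n ∪ SigStr n := by
  intro N
  induction N with
  | pi A B ihA ihB =>
      intro hnf T hT
      obtain ⟨k, hk⟩ := ihA (fun C hC => hnf _ (.piL hC)) A .refl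
      obtain ⟨l, hl⟩ := ihB (fun C hC => hnf _ (.piR hC)) B .refl
      refine ⟨k + l + 1, Or.inl ?_⟩
      rw [piStr_succ]
      exact ⟨k, l, rfl, A, B, ⟨_, .refl, hnf⟩, conv_of_rtg hT, hk, hl⟩
  | sigma A B ihA ihB =>
      intro hnf T hT
      obtain ⟨k, hk⟩ := ihA (fun C hC => hnf _ (.sigmaL hC)) A .refl
      obtain ⟨l, hl⟩ := ihB (fun C hC => hnf _ (.sigmaR hC)) B .refl
      refine ⟨k + l + 1, Or.inr ?_⟩
      rw [sigStr_succ]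
      exact ⟨k, l, rfl, A, B, ⟨_, .refl, hnf⟩, conv_of_rtg hT, hk, hl⟩
  | var n => intro hnf T hT; exact ⟨0, Or.inl (by rw [piStr_zero]; exact mem_base hnf (by simp [BinderHeaded]) hT)⟩
  | prop => intro hnf T hT; exact ⟨0, Or.inl (by rw [piStr_zero]; exact mem_base hnf (by simp [BinderHeaded]) hT)⟩
  | type j => intro hnf T hT; exact ⟨0, Or.inl (by rw [piStr_zero]; exact mem_base hnf (by simp [BinderHeaded]) hT)⟩
  | lam A M _ _ => intro hnf T hT; exact ⟨0, Or.inl (by rw [piStr_zero]; exact mem_base hnf (by simp [BinderHeaded]) hT)⟩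
  | app A M _ _ => intro hnf T hT; exact ⟨0, Or.inl (by rw [piStr_zero]; exact mem_base hnf (by simp [BinderHeaded]) hT)⟩
  | pair A M B _ _ _ => intro hnf T hT; exact ⟨0, Or.inl (by rw [piStr_zero]; exact mem_base hnf (by simp [BinderHeaded]) hT)⟩
  | proj1 A _ => intro hnf T hT; exact ⟨0, Or.inl (by rw [piStr_zero]; exact mem_base hnf (by simp [BinderHeaded]) hT)⟩
  | proj2 A _ => intro hnf T hT; exact ⟨0, Or.inl (by rw [piStr_zero]; exact mem_base hnf (by simp [BinderHeaded]) hT)⟩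

theorem hasNF_of_mem_strata (h : T ∈ PiStr n ∪ SigStr n) : HasNF T := by
  cases n with
  | zero =>
      rw [piStr_zero, sigStr_zero] at h
      rcases h with h | h <;> exact h.1
  | succ n =>
      rw [piStr_succ, sigStr_succ] at h
      rcases h with ⟨k, l, _, A, B, hNF, hconv, _, _⟩ | ⟨k, l, _, A, B, hNF, hconv, _, _⟩ <;>
        exact hasNF_of_conv hconv hNF

end ECC

/-- every normalisable ECC term lies in some stratum:
`𝒯 = ⋃_{n∈ω} (Π_n ∪ Σ_n)`. -/
theorem Tset_eq_union_strata :
    ECC.Tset = ⋃ n : ℕ, (ECC.PiStr n ∪ ECC.SigStr n) := by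
  ext T
  simp only [Set.mem_iUnion]
  constructor
  · rintro ⟨N, hTN, hnf⟩
    exact ECC.mem_strata_of_nf N hnf T hTN
  · rintro ⟨n, h⟩
    exact ECC.hasNF_of_mem_strata h
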